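/- Let 0 < η < 1, 0 < α < 1, L ∈ ℕ, and let X, X' be random variables with values in [η,1] satisfying E[X^j] = E[X'^j] for j = 1,...,L. Define random variables U, U' with distributions P_U(A) = (1 − E[η/X])·1{0∈A} + E[(η/X)·1{αX/η ∈ A}] and P_{U'}(A) = (1 − E[η/X'])·1{0∈A} + E[(η/X')·1{αX'/η ∈ A}]. Then: (i) E[φ(U)] − E[φ(U')] = α·(E[log(1/X)] − E[log(1/X')]); (ii) E[U^j] = E[U'^j] for j = 1,...,L+1; in particular E[U] = E[U'] = α. -/

import Mathlib

open scoped BigOperators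
open Real MeasureTheory

noncomputable section

open scoped NNReal ENNReal

/-- `φ(x) = x log (1/x)`, with `φ(0) = 0`. -/
def phi (x : ℝ) : ℝ := x * Real.log (1 / x)


lemma expect_eq (η α : ℝ) (hη0 : 0 < η) (hη1 : η ≤ 1) (hα0 : 0 < α)
    (μ ν : Measure ℝ) [IsProbabilityMeasure μ] [IsProbabilityMeasure ν]
    (hμ : ∀ᵐ x ∂μ, x ∈ Set.Icc η 1)
    (hν : ∀ A : Set ℝ, MeasurableSet A →
      (ν A).toReal =
        (1 - ∫ x, η / x ∂μ) * A.indicator (fun _ => (1 : ℝ)) 0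
          + ∫ x, (η / x) * A.indicator (fun _ => (1 : ℝ)) (α * x / η) ∂μ)
    (f : ℝ → ℝ) (hf : Measurable f) (C : ℝ)
    (hC : ∀ t ∈ Set.Icc α (α / η), |f t| ≤ C) :
    ∫ x, f x ∂ν = (1 - ∫ x, η / x ∂μ) * f 0 + ∫ x, (η / x) * f (α * x / η) ∂μ := by
  set c : ℝ := ∫ x, η / x ∂μ with hc
  set g : ℝ → ℝ := fun x => α * x / η with hgdef
  have hg_meas : Measurable g := (measurable_id.const_mul α).div_const η
  set w : ℝ → ℝ≥0 := fun x => (η / x).toNNReal with hwdef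
  have hw_meas : Measurable w := (measurable_const.div measurable_id).real_toNNReal
  have hae : ∀ᵐ x ∂μ, 0 < x ∧ 0 ≤ η / x ∧ η / x ≤ 1 ∧ g x ∈ Set.Icc α (α / η) := by
    filter_upwards [hμ] with x hx
    have hx0 : 0 < x := lt_of_lt_of_le hη0 hx.1
    refine ⟨hx0, div_nonneg hη0.le hx0.le, (div_le_one hx0).2 hx.1, ?_, ?_⟩
    · show α ≤ α * x / η
      rw [le_div_iff₀ hη0]
      nlinarith [hx.1]
    · show α * x / η ≤ α / η
      rw [div_le_div_iff₀ hη0 hη0]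
      nlinarith [mul_nonneg (mul_nonneg hα0.le hη0.le) (sub_nonneg.2 hx.2)]
  have hd_meas : Measurable fun x : ℝ => η / x := measurable_const.div measurable_id
  have hg_int : Integrable (fun x => η / x) μ := by
    refine (integrable_const (1 : ℝ)).mono' hd_meas.aestronglyMeasurable ?_
    filter_upwards [hae] with x hx
    rw [Real.norm_eq_abs, abs_of_nonneg hx.2.1]; exact hx.2.2.1
  have hc1 : c ≤ 1 := by
    have : c ≤ ∫ _x, (1 : ℝ) ∂μ := by
      apply integral_mono_ae hg_int (integrable_const 1)
      filter_upwards [hae] with x hx using hx.2.2.1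
    simpa using this
  set σ : Measure ℝ := μ.withDensity (fun x => (w x : ℝ≥0∞)) with hσdef
  have hcoe : ∀ x : ℝ, ((w x : ℝ≥0∞)) = ENNReal.ofReal (η / x) := fun x => rfl
  have hσfin : IsFiniteMeasure σ := by
    constructor
    rw [hσdef, withDensity_apply _ MeasurableSet.univ, setLIntegral_univ]
    have : ∫⁻ x, (w x : ℝ≥0∞) ∂μ ≤ ∫⁻ _x, 1 ∂μ := by
      apply lintegral_mono_ae
      filter_upwards [hae] with x hx
      rw [hcoe]
      exact ENNReal.ofReal_le_one.2 hx.2.2.1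
    apply lt_of_le_of_lt this
    simp
  set m : Measure ℝ := ENNReal.ofReal (1 - c) • Measure.dirac (0 : ℝ) + Measure.map g σ
    with hmdef
  -- auxiliary: lintegral over preimage equals the Bochner integral
  have key_li : ∀ A : Set ℝ, MeasurableSet A →
      (σ (g ⁻¹' A)).toReal = ∫ x, (η / x) * A.indicator (fun _ => (1 : ℝ)) (g x) ∂μ := by
    intro A hA
    have hS : MeasurableSet (g ⁻¹' A) := hg_meas hA
    have h1 : σ (g ⁻¹' A) = ∫⁻ x in g ⁻¹' A, ENNReal.ofReal (η / x) ∂μ := by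
      rw [hσdef, withDensity_apply _ hS]
      rfl
    have h2 : ENNReal.ofReal (∫ x in g ⁻¹' A, η / x ∂μ)
        = ∫⁻ x in g ⁻¹' A, ENNReal.ofReal (η / x) ∂μ := by
      apply MeasureTheory.ofReal_integral_eq_lintegral_ofReal (hg_int.restrict)
      filter_upwards [ae_restrict_of_ae hae] with x hx using hx.2.1
    have h3 : 0 ≤ ∫ x in g ⁻¹' A, η / x ∂μ := by
      apply integral_nonneg_of_ae
      filter_upwards [ae_restrict_of_ae hae] with x hx using hx.2.1
    rw [h1, ← h2, ENNReal.toReal_ofReal h3, ← integral_indicator hS]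
    apply integral_congr_ae
    filter_upwards with x
    by_cases hxA : g x ∈ A
    · simp [Set.indicator_of_mem, hxA, Set.mem_preimage, Set.indicator_of_mem (Set.mem_preimage.2 hxA)]
    · simp [Set.indicator_of_notMem, hxA, Set.mem_preimage,
        Set.indicator_of_notMem (fun h => hxA (Set.mem_preimage.1 h))]
  have hνm : ν = m := by
    ext A hA
    have hνfin : ν A ≠ ⊤ := (measure_lt_top ν A).ne
    have hmap : Measure.map g σ A = σ (g ⁻¹' A) := Measure.map_apply hg_meas hA
    have hmfin : m A ≠ ⊤ := by
      rw [hmdef]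
      simp only [Measure.add_apply, Measure.smul_apply, smul_eq_mul]
      apply ENNReal.add_ne_top.2
      constructor
      · exact ENNReal.mul_ne_top ENNReal.ofReal_ne_top (measure_ne_top _ _)
      · rw [hmap]; exact measure_ne_top _ _
    refine ((ENNReal.toReal_eq_toReal_iff' hνfin hmfin).1 ?_)
    rw [hν A hA, hmdef]
    simp only [Measure.add_apply, Measure.smul_apply, smul_eq_mul]
    rw [ENNReal.toReal_add (ENNReal.mul_ne_top ENNReal.ofReal_ne_top (measure_ne_top _ _))
      (by rw [hmap]; exact measure_ne_top _ _), ENNReal.toReal_mul,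
      ENNReal.toReal_ofReal (by linarith), hmap, key_li A hA]
    congr 2
    rw [Measure.dirac_apply' _ hA]
    by_cases h0 : 0 ∈ A
    · simp [Set.indicator_of_mem h0]
    · simp [Set.indicator_of_notMem h0]
  -- integrability
  have hCnn : 0 ≤ C := by
    have := hC α ⟨le_refl α, by
      calc α = α / 1 := by ring
        _ ≤ α / η := by apply div_le_div_of_nonneg_left hα0.le hη0 hη1⟩
    exact le_trans (abs_nonneg _) this
  have hfg_int : Integrable (fun x => w x • f (g x)) μ := by
    refine (integrable_const C).mono'
      ((hw_meas.coe_nnreal_real.smul ((hf.comp hg_meas)))).aestronglyMeasurable ?_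
    filter_upwards [hae] with x hx
    have hw1 : (w x : ℝ) = η / x := Real.coe_toNNReal _ hx.2.1
    rw [Real.norm_eq_abs, NNReal.smul_def, smul_eq_mul, abs_mul, hw1, abs_of_nonneg hx.2.1]
    calc (η / x) * |f (g x)| ≤ 1 * C :=
      mul_le_mul hx.2.2.1 (hC _ hx.2.2.2) (abs_nonneg _) zero_le_one
    _ = C := one_mul C
  have hint_map : Integrable f (Measure.map g σ) := by
    rw [integrable_map_measure hf.aestronglyMeasurable hg_meas.aemeasurable]
    exact (integrable_withDensity_iff_integrable_smul hw_meas).2 hfg_int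
  have hint_dirac : Integrable f (Measure.dirac (0 : ℝ)) := by
    constructor
    · exact hf.aestronglyMeasurable
    · rw [hasFiniteIntegral_iff_norm, lintegral_dirac]
      exact ENNReal.ofReal_lt_top
  have hint_smul : Integrable f (ENNReal.ofReal (1 - c) • Measure.dirac (0 : ℝ)) :=
    hint_dirac.smul_measure ENNReal.ofReal_ne_top
  -- final computation
  rw [hνm, hmdef, integral_add_measure hint_smul hint_map,
    integral_smul_measure, integral_dirac, ENNReal.toReal_ofReal (by linarith),
    integral_map hg_meas.aemeasurable hf.aestronglyMeasurable,
    hσdef, integral_withDensity_eq_integral_smul hw_meas]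
  rw [smul_eq_mul]
  congr 1
  apply integral_congr_ae
  filter_upwards [hae] with x hx
  rw [NNReal.smul_def, smul_eq_mul, Real.coe_toNNReal _ hx.2.1]

lemma moment_eq (η α : ℝ) (hη0 : 0 < η) (hη1 : η ≤ 1) (hα0 : 0 < α)
    (μ ν : Measure ℝ) [IsProbabilityMeasure μ] [IsProbabilityMeasure ν]
    (hμ : ∀ᵐ x ∂μ, x ∈ Set.Icc η 1)
    (hν : ∀ A : Set ℝ, MeasurableSet A →
      (ν A).toReal =
        (1 - ∫ x, η / x ∂μ) * A.indicator (fun _ => (1 : ℝ)) 0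
          + ∫ x, (η / x) * A.indicator (fun _ => (1 : ℝ)) (α * x / η) ∂μ)
    (k : ℕ) :
    ∫ x, x ^ (k + 1) ∂ν = (α ^ (k + 1) / η ^ k) * ∫ x, x ^ k ∂μ := by
  have hb : ∀ t ∈ Set.Icc α (α / η), |t ^ (k + 1)| ≤ (α / η) ^ (k + 1) := by
    intro t ht
    rw [abs_pow, abs_of_nonneg (le_trans hα0.le ht.1)]
    exact pow_le_pow_left₀ (le_trans hα0.le ht.1) ht.2 _
  have h := expect_eq η α hη0 hη1 hα0 μ ν hμ hν (fun t => t ^ (k + 1))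
    (measurable_id.pow_const _) ((α / η) ^ (k + 1)) hb
  rw [h]
  beta_reduce
  have hz : (0 : ℝ) ^ (k + 1) = 0 := by simp
  rw [hz, mul_zero, zero_add]
  have hcongr : ∫ x, (η / x) * (α * x / η) ^ (k + 1) ∂μ
      = ∫ x, (α ^ (k + 1) / η ^ k) * x ^ k ∂μ := by
    apply integral_congr_ae
    filter_upwards [hμ] with x hx
    have hx0 : (0 : ℝ) < x := lt_of_lt_of_le hη0 hx.1
    rw [div_pow, mul_pow]
    field_simp
    ring
  rw [hcongr, integral_const_mul]

lemma phi_expect (η α : ℝ) (hη0 : 0 < η) (hη1 : η ≤ 1) (hα0 : 0 < α)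
    (μ ν : Measure ℝ) [IsProbabilityMeasure μ] [IsProbabilityMeasure ν]
    (hμ : ∀ᵐ x ∂μ, x ∈ Set.Icc η 1)
    (hν : ∀ A : Set ℝ, MeasurableSet A →
      (ν A).toReal =
        (1 - ∫ x, η / x ∂μ) * A.indicator (fun _ => (1 : ℝ)) 0
          + ∫ x, (η / x) * A.indicator (fun _ => (1 : ℝ)) (α * x / η) ∂μ) :
    ∫ x, phi x ∂ν = α * Real.log (η / α) + α * ∫ x, Real.log (1 / x) ∂μ := by
  have hphim : Measurable phi :=
    measurable_id.mul (Real.measurable_log.comp (measurable_const.div measurable_id))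
  have hb : ∀ t ∈ Set.Icc α (α / η), |phi t| ≤ (α / η) ^ 2 + 1 := by
    intro t ht
    have ht0 : 0 < t := lt_of_lt_of_le hα0 ht.1
    have hlog : |Real.log t| ≤ t + 1 / t := by
      rw [abs_le]
      constructor
      · have := Real.log_le_sub_one_of_pos (show (0:ℝ) < 1/t by positivity)
        rw [Real.log_div one_ne_zero ht0.ne'] at this
        simp only [Real.log_one, zero_sub] at this
        nlinarith [one_div_pos.2 ht0]
      · nlinarith [Real.log_le_sub_one_of_pos ht0, one_div_pos.2 ht0]
    have habs : |phi t| ≤ t * (t + 1 / t) := by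
      unfold phi
      rw [abs_mul, abs_of_nonneg ht0.le, Real.log_div one_ne_zero ht0.ne']
      simp only [Real.log_one, zero_sub, abs_neg]
      exact mul_le_mul_of_nonneg_left hlog ht0.le
    have ht2 : t * (t + 1 / t) = t ^ 2 + 1 := by field_simp
    rw [ht2] at habs
    refine le_trans habs ?_
    have : t ^ 2 ≤ (α / η) ^ 2 := pow_le_pow_left₀ ht0.le ht.2 2
    linarith
  have h := expect_eq η α hη0 hη1 hα0 μ ν hμ hν phi hphim ((α / η) ^ 2 + 1) hb
  rw [h]
  have hphi0 : phi 0 = 0 := by simp [phi]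
  rw [hphi0, mul_zero, zero_add]
  have hlog_int : Integrable (fun x => Real.log (1 / x)) μ := by
    refine (integrable_const (Real.log (1 / η))).mono'
      ((Real.measurable_log.comp (measurable_const.div measurable_id)).aestronglyMeasurable) ?_
    filter_upwards [hμ] with x hx
    have hx0 : (0 : ℝ) < x := lt_of_lt_of_le hη0 hx.1
    rw [Real.norm_eq_abs, abs_of_nonneg (Real.log_nonneg (by rw [le_div_iff₀ hx0]; linarith [hx.2]))]
    apply Real.log_le_log (by positivity)
    exact one_div_le_one_div_of_le hη0 hx.1
  have hcongr : ∫ x, (η / x) * phi (α * x / η) ∂μ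
      = ∫ x, (α * Real.log (η / α) + α * Real.log (1 / x)) ∂μ := by
    apply integral_congr_ae
    filter_upwards [hμ] with x hx
    have hx0 : (0 : ℝ) < x := lt_of_lt_of_le hη0 hx.1
    have h1 : (η / x) * phi (α * x / η) = α * Real.log (1 / (α * x / η)) := by
      unfold phi; field_simp
    have h2 : (1 : ℝ) / (α * x / η) = (η / α) * (1 / x) := by field_simp
    rw [h1, h2, Real.log_mul (by positivity) (by positivity), mul_add]
  rw [hcongr, integral_add (integrable_const _) (hlog_int.const_mul α),
    integral_const, integral_const_mul]
  simp [measure_univ]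

/-- construction of the priors `U, U'` from `X, X'` by change of measure. -/
theorem change_of_measure_prior
    (η α : ℝ) (hη0 : 0 < η) (hη1 : η < 1) (hα0 : 0 < α) (hα1 : α < 1) (L : ℕ)
    (μ μ' ν ν' : Measure ℝ)
    [IsProbabilityMeasure μ] [IsProbabilityMeasure μ']
    [IsProbabilityMeasure ν] [IsProbabilityMeasure ν']
    (hμ : ∀ᵐ x ∂μ, x ∈ Set.Icc η 1) (hμ' : ∀ᵐ x ∂μ', x ∈ Set.Icc η 1)
    (hmom : ∀ j : ℕ, 1 ≤ j → j ≤ L → ∫ x, x ^ j ∂μ = ∫ x, x ^ j ∂μ')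
    -- `ν` is the distribution of `U`:
    -- `P_U(A) = (1 − E[η/X])·1{0∈A} + E[(η/X)·1{αX/η ∈ A}]`
    (hν : ∀ A : Set ℝ, MeasurableSet A →
      (ν A).toReal =
        (1 - ∫ x, η / x ∂μ) * A.indicator (fun _ => (1 : ℝ)) 0
          + ∫ x, (η / x) * A.indicator (fun _ => (1 : ℝ)) (α * x / η) ∂μ)
    -- `ν'` is the distribution of `U'`:
    (hν' : ∀ A : Set ℝ, MeasurableSet A →
      (ν' A).toReal =
        (1 - ∫ x, η / x ∂μ') * A.indicator (fun _ => (1 : ℝ)) 0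
          + ∫ x, (η / x) * A.indicator (fun _ => (1 : ℝ)) (α * x / η) ∂μ') :
    ((∫ x, phi x ∂ν) - ∫ x, phi x ∂ν'
        = α * ((∫ x, Real.log (1 / x) ∂μ) - ∫ x, Real.log (1 / x) ∂μ')) ∧
    (∀ j : ℕ, 1 ≤ j → j ≤ L + 1 → ∫ x, x ^ j ∂ν = ∫ x, x ^ j ∂ν') ∧
    (∫ x, x ∂ν) = α ∧ (∫ x, x ∂ν') = α := by
  have hη1' : η ≤ 1 := hη1.le
  refine ⟨?_, ?_, ?_, ?_⟩
  · rw [phi_expect η α hη0 hη1' hα0 μ ν hμ hν, phi_expect η α hη0 hη1' hα0 μ' ν' hμ' hν']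
    ring
  · intro j h1 h2
    obtain ⟨k, rfl⟩ : ∃ k, j = k + 1 := ⟨j - 1, by omega⟩
    rw [moment_eq η α hη0 hη1' hα0 μ ν hμ hν k, moment_eq η α hη0 hη1' hα0 μ' ν' hμ' hν' k]
    congr 1
    rcases Nat.eq_zero_or_pos k with hk | hk
    · subst hk; simp
    · exact hmom k hk (by omega)
  · simpa using moment_eq η α hη0 hη1' hα0 μ ν hμ hν 0
  · simpa using moment_eq η α hη0 hη1' hα0 μ' ν' hμ' hν' 0
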